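/- If V is a finite-dimensional vector space over a division ring F, then the endomorphism ring End(V) is unit regular: every endomorphism φ satisfies φ ∘ u ∘ φ = φ for some invertible endomorphism u. -/

import Mathlib

/-- The endomorphism ring of a finite-dimensional vector space over a division
ring is unit regular. -/
theorem end_unit_regular (F V : Type*) [DivisionRing F] [AddCommGroup V] [Module F V]
    [FiniteDimensional F V] :
    ∀ φ : Module.End F V, ∃ u : (Module.End F V)ˣ, φ * (u : Module.End F V) * φ = φ := by
  intro φ
  set K := LinearMap.ker φ with hK
  set R := LinearMap.range φ with hR
  obtain ⟨W, hW⟩ := Submodule.exists_isCompl K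
  obtain ⟨C, hC⟩ := Submodule.exists_isCompl R
  -- R ≃ W
  let eRW : R ≃ₗ[F] W :=
    (φ.quotKerEquivRange.symm).trans (Submodule.quotientEquivOfIsCompl K W hW)
  -- key property: φ (eRW r) = r
  have hkey : ∀ r : R, φ (eRW r : V) = (r : V) := by
    intro r
    have h1 : Submodule.Quotient.mk (p := K) (eRW r : V) = φ.quotKerEquivRange.symm r := by
      simpa [eRW] using
        (Submodule.quotientEquivOfIsCompl K W hW).apply_symm_apply (φ.quotKerEquivRange.symm r)
    have h2 : φ.quotKerEquivRange (Submodule.Quotient.mk (eRW r : V)) = r := by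
      rw [h1]; exact φ.quotKerEquivRange.apply_symm_apply r
    have h3 := congrArg Subtype.val h2
    simpa [LinearMap.quotKerEquivRange] using h3
  -- finrank: K ≃ C
  have hfin : Module.finrank F C = Module.finrank F K := by
    have h1 := Submodule.finrank_add_eq_of_isCompl hW
    have h2 := Submodule.finrank_add_eq_of_isCompl hC
    have h3 : Module.finrank F W = Module.finrank F R := eRW.symm.finrank_eq
    omega
  let eCK : C ≃ₗ[F] K := LinearEquiv.ofFinrankEq _ _ hfin
  -- the automorphism
  let e : V ≃ₗ[F] V :=
    (Submodule.prodEquivOfIsCompl R C hC).symm.trans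
      ((eRW.prodCongr eCK).trans (Submodule.prodEquivOfIsCompl W K hW.symm))
  refine ⟨⟨e.toLinearMap, e.symm.toLinearMap, ?_, ?_⟩, ?_⟩
  · ext x; simp [Module.End.mul_apply]
  · ext x; simp [Module.End.mul_apply]
  · ext x
    have hmem : φ x ∈ R := LinearMap.mem_range_self φ x
    have he : e (φ x) = (eRW ⟨φ x, hmem⟩ : V) := by
      have : (Submodule.prodEquivOfIsCompl R C hC).symm (φ x)
          = ((⟨φ x, hmem⟩ : R), (0 : C)) := by
        simpa using Submodule.prodEquivOfIsCompl_symm_apply_left R C hC ⟨φ x, hmem⟩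
      simp [e, this, Submodule.coe_prodEquivOfIsCompl']
    simp only [Module.End.mul_apply, LinearEquiv.coe_coe]
    rw [he]
    exact hkey ⟨φ x, hmem⟩
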